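/- The endomorphism P on tangent spaces of S³×S³ defined by P(U,V) = (pq⁻¹V, qp⁻¹U) at the point (p,q) satisfies P² = Id, PJ = −JP, and g(PZ, PZ') = g(Z,Z') for all tangent vectors Z, Z'. -/

import Mathlib

noncomputable section

/-- The almost complex structure `J` of the nearly Kähler `S³ × S³` at the point `(p, q)`. -/
def NKJ (p q : Quaternion ℝ) (Z : Quaternion ℝ × Quaternion ℝ) :
    Quaternion ℝ × Quaternion ℝ :=
  ((Real.sqrt 3)⁻¹ • ((2 : ℝ) • (p * q⁻¹ * Z.2) - Z.1),
   (Real.sqrt 3)⁻¹ • (-((2 : ℝ) • (q * p⁻¹ * Z.1)) + Z.2))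

/-- The nearly Kähler metric `g(Z,Z') = ½(⟨Z,Z'⟩ + ⟨JZ,JZ'⟩)` at `(p, q)`. -/
def NKg (p q : Quaternion ℝ) (Z Z' : Quaternion ℝ × Quaternion ℝ) : ℝ :=
  (1 / 2 : ℝ) * (((inner ℝ Z.1 Z'.1 : ℝ) + (inner ℝ Z.2 Z'.2 : ℝ))
    + ((inner ℝ (NKJ p q Z).1 (NKJ p q Z').1 : ℝ) + (inner ℝ (NKJ p q Z).2 (NKJ p q Z').2 : ℝ)))

/-- The almost product structure `P` at `(p, q)`: `P(U,V) = (pq⁻¹V, qp⁻¹U)`. -/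
def NKP (p q : Quaternion ℝ) (Z : Quaternion ℝ × Quaternion ℝ) :
    Quaternion ℝ × Quaternion ℝ :=
  (p * q⁻¹ * Z.2, q * p⁻¹ * Z.1)

lemma inner_unit_mul (a x y : Quaternion ℝ) (ha : ‖a‖ = 1) :
    (inner ℝ (a * x) (a * y) : ℝ) = inner ℝ x y := by
  rw [real_inner_eq_norm_add_mul_self_sub_norm_mul_self_sub_norm_mul_self_div_two,
    real_inner_eq_norm_add_mul_self_sub_norm_mul_self_sub_norm_mul_self_div_two x y,
    ← mul_add, norm_mul, norm_mul, norm_mul, ha]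
  ring

/-- `P² = Id`, `PJ = -JP` and `P` is compatible with `g`. -/
theorem NKP_properties (p q : Quaternion ℝ) (hp : ‖p‖ = 1) (hq : ‖q‖ = 1)
    (Z Z' : Quaternion ℝ × Quaternion ℝ)
    (hZ : (inner ℝ Z.1 p : ℝ) = 0 ∧ (inner ℝ Z.2 q : ℝ) = 0)
    (hZ' : (inner ℝ Z'.1 p : ℝ) = 0 ∧ (inner ℝ Z'.2 q : ℝ) = 0) :
    NKP p q (NKP p q Z) = Z ∧
    NKP p q (NKJ p q Z) = -(NKJ p q (NKP p q Z)) ∧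
    NKg p q (NKP p q Z) (NKP p q Z') = NKg p q Z Z' := by
  have hp0 : p ≠ 0 := by intro h; rw [h, norm_zero] at hp; norm_num at hp
  have hq0 : q ≠ 0 := by intro h; rw [h, norm_zero] at hq; norm_num at hq
  have hpq : ‖p * q⁻¹‖ = 1 := by rw [norm_mul, norm_inv, hp, hq]; norm_num
  have hqp : ‖q * p⁻¹‖ = 1 := by rw [norm_mul, norm_inv, hp, hq]; norm_num
  have h1 : NKP p q (NKP p q Z) = Z := by
    simp [NKP, mul_assoc, inv_mul_cancel_left₀ hp0, inv_mul_cancel_left₀ hq0,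
      mul_inv_cancel_left₀ hp0, mul_inv_cancel_left₀ hq0]
  have h2 : NKP p q (NKJ p q Z) = -(NKJ p q (NKP p q Z)) := by
    simp only [NKP, NKJ, Prod.neg_mk, Prod.mk.injEq]
    constructor
    · rw [mul_smul_comm, mul_add, mul_neg, mul_smul_comm, ← mul_assoc, ← mul_assoc,
        mul_assoc p q⁻¹ q, inv_mul_cancel₀ hq0, mul_one, mul_inv_cancel₀ hp0, one_mul]
      module
    · rw [mul_smul_comm, mul_sub, mul_smul_comm, ← mul_assoc, ← mul_assoc,
        mul_assoc q p⁻¹ p, inv_mul_cancel₀ hp0, mul_one, mul_inv_cancel₀ hq0, one_mul]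
      module
  refine ⟨h1, h2, ?_⟩
  have hJP1 : (NKJ p q (NKP p q Z)).1 = -(NKP p q (NKJ p q Z)).1 := by rw [h2]; simp
  have hJP2 : (NKJ p q (NKP p q Z)).2 = -(NKP p q (NKJ p q Z)).2 := by rw [h2]; simp
  have h2' : NKP p q (NKJ p q Z') = -(NKJ p q (NKP p q Z')) := by
    simp only [NKP, NKJ, Prod.neg_mk, Prod.mk.injEq]
    constructor
    · rw [mul_smul_comm, mul_add, mul_neg, mul_smul_comm, ← mul_assoc, ← mul_assoc,
        mul_assoc p q⁻¹ q, inv_mul_cancel₀ hq0, mul_one, mul_inv_cancel₀ hp0, one_mul]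
      module
    · rw [mul_smul_comm, mul_sub, mul_smul_comm, ← mul_assoc, ← mul_assoc,
        mul_assoc q p⁻¹ p, inv_mul_cancel₀ hp0, mul_one, mul_inv_cancel₀ hq0, one_mul]
      module
  have hJP1' : (NKJ p q (NKP p q Z')).1 = -(NKP p q (NKJ p q Z')).1 := by rw [h2']; simp
  have hJP2' : (NKJ p q (NKP p q Z')).2 = -(NKP p q (NKJ p q Z')).2 := by rw [h2']; simp
  unfold NKg
  rw [hJP1, hJP2, hJP1', hJP2', inner_neg_neg, inner_neg_neg]
  show (1/2 : ℝ) * (((inner ℝ (NKP p q Z).1 (NKP p q Z').1 : ℝ) + _) + _) = _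
  simp only [NKP]
  rw [inner_unit_mul _ _ _ hpq, inner_unit_mul _ _ _ hqp,
    inner_unit_mul _ _ _ hpq, inner_unit_mul _ _ _ hqp]
  ring
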